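/- Let K be a (skew) field, γ: K → K a ring automorphism, and f ∈ K_γ[t^{±1}] a nonzero element. Then deg(f) equals the dimension of the quotient K_γ[t^{±1}]/f·K_γ[t^{±1}] as a right K-vector space. -/

import Mathlib

/-- A model of the skew Laurent polynomial ring `K_γ[t^{±1}]`: a ring `R` together with
an embedding `ι : K → R`, a unit `t` satisfying `t * ι a = ι (γ a) * t`, such that the
elements `ι a * t^i` form a basis, i.e. every element of `R` is uniquely a finite sum
`∑ ι aᵢ * t^i`. -/
structure SkewLaurent (K : Type) [DivisionRing K] (γ : K ≃+* K) (R : Type) [Ring R] where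
  ι : K →+* R
  t : Rˣ
  tcomm : ∀ a : K, (t : R) * ι a = ι (γ a) * (t : R)
  repr : (ℤ →₀ K) ≃+ R
  repr_single : ∀ (i : ℤ) (a : K), repr (Finsupp.single i a) = ι a * ((t ^ i : Rˣ) : R)

namespace SkewLaurent
variable {K : Type} [DivisionRing K] {γ : K ≃+* K} {R : Type} [Ring R]

/-- The degree `n - m` of a nonzero skew Laurent polynomial `∑_{i=m}^n aᵢ t^i`
(with `a_m ≠ 0`, `a_n ≠ 0`); junk value `0` for `f = 0`. -/
noncomputable def deg (S : SkewLaurent K γ R) (f : R) : ℤ :=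
  if h : (S.repr.symm f).support.Nonempty then
    (S.repr.symm f).support.max' h - (S.repr.symm f).support.min' h
  else 0

end SkewLaurent

open Finsupp

namespace SL
variable {K : Type} [DivisionRing K] {γ : K ≃+* K} {R : Type} [Ring R]

def gp (γ : K ≃+* K) (i : ℤ) : K ≃+* K := (show RingAut K from γ) ^ i

lemma gp_zero (a : K) : gp γ 0 a = a := by simp [gp]

lemma gp_add_one (i : ℤ) (a : K) : gp γ (i+1) a = gp γ i (γ a) := by
  show ((show RingAut K from γ) ^ (i+1)) a = _
  rw [zpow_add_one]; rfl

lemma gp_sub_one (i : ℤ) (a : K) : gp γ (i-1) a = gp γ i (γ.symm a) := by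
  show ((show RingAut K from γ) ^ (i-1)) a = _
  rw [zpow_sub_one]; rfl

variable (S : SkewLaurent K γ R)

lemma t_zpow_mul (i : ℤ) : ∀ a : K,
    ((S.t ^ i : Rˣ) : R) * S.ι a = S.ι (gp γ i a) * ((S.t ^ i : Rˣ) : R) := by
  induction i using Int.induction_on with
  | zero => intro a; simp [gp_zero]
  | succ i ih =>
    intro a
    have h : ((i:ℤ) + 1) = (i:ℤ) + 1 := rfl
    rw [zpow_add_one, Units.val_mul, mul_assoc, S.tcomm, ← mul_assoc, ih (γ a),
      mul_assoc, ← Units.val_mul, ← zpow_add_one, gp_add_one]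
  | pred i ih =>
    intro a
    have key : ((S.t⁻¹ : Rˣ) : R) * S.ι a = S.ι (γ.symm a) * ((S.t⁻¹ : Rˣ) : R) := by
      have h1 : (S.t : R) * S.ι (γ.symm a) = S.ι a * (S.t : R) := by
        rw [S.tcomm]; rw [RingEquiv.apply_symm_apply]
      calc ((S.t⁻¹ : Rˣ) : R) * S.ι a
          = ((S.t⁻¹ : Rˣ) : R) * (S.ι a * (S.t : R)) * ((S.t⁻¹:Rˣ) : R) := by
            rw [mul_assoc ((S.t⁻¹ : Rˣ) : R), mul_assoc (S.ι a), Units.mul_inv, mul_one]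
        _ = ((S.t⁻¹ : Rˣ) : R) * ((S.t : R) * S.ι (γ.symm a)) * ((S.t⁻¹:Rˣ):R) := by rw [h1]
        _ = S.ι (γ.symm a) * ((S.t⁻¹ : Rˣ) : R) := by
            rw [← mul_assoc, Units.inv_mul, one_mul]
    rw [show (-(i:ℤ) - 1) = (-(i:ℤ)) - 1 from rfl, zpow_sub_one, Units.val_mul, mul_assoc, key,
      ← mul_assoc, ih (γ.symm a), mul_assoc, ← Units.val_mul, ← zpow_sub_one, gp_sub_one]

lemma repr_single_mul (i j : ℤ) (a b : K) :
    S.repr (single i a) * S.repr (single j b) = S.repr (single (i+j) (a * gp γ i b)) := by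
  rw [S.repr_single, S.repr_single, S.repr_single]
  have ht : ((S.t ^ (i+j) : Rˣ) : R) = ((S.t^i : Rˣ):R) * ((S.t^j:Rˣ):R) := by
    rw [zpow_add]; rfl
  rw [ht, map_mul, mul_assoc, ← mul_assoc ((S.t^i:Rˣ):R) (S.ι b), t_zpow_mul,
    mul_assoc, ← mul_assoc]


lemma mul_repr_single (f : R) (j : ℤ) (b : K) :
    f * S.repr (single j b) =
      S.repr ((S.repr.symm f).sum fun i a => single (i+j) (a * gp γ i b)) := by
  obtain ⟨v, rfl⟩ : ∃ v, S.repr v = f := ⟨S.repr.symm f, S.repr.apply_symm_apply f⟩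
  rw [S.repr.symm_apply_apply]
  induction v using Finsupp.induction with
  | zero => simp
  | single_add i a w hi ha ih =>
    rw [map_add, add_mul, ih, repr_single_mul, ← map_add]
    congr 1
    rw [Finsupp.sum_add_index' (fun k => by simp) (fun k b1 b2 => by rw [add_mul, single_add]),
      Finsupp.sum_single_index (by simp)]

lemma coeff_mul_single (f : R) (j b : _) (k : ℤ) :
    S.repr.symm (f * S.repr (single j b)) k = (S.repr.symm f) (k - j) * gp γ (k-j) b := by
  rw [mul_repr_single, S.repr.symm_apply_apply]
  set v := S.repr.symm f with hv
  rw [Finsupp.sum_apply, Finsupp.sum]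
  rw [Finset.sum_congr rfl (fun i _ => ?_), Finset.sum_ite_eq' v.support (k-j)
    (fun i => v i * gp γ i b)]
  · by_cases h : k - j ∈ v.support
    · simp [h]
    · simp [h, Finsupp.notMem_support_iff.mp h]
  · rw [Finsupp.single_apply]
    exact if_congr (by omega) rfl rfl

lemma coeff_mul (f : R) (r : ℤ→₀K) (k : ℤ) :
    S.repr.symm (f * S.repr r) k
      = ∑ j ∈ r.support, (S.repr.symm f) (k - j) * gp γ (k-j) (r j) := by
  have h1 : f * S.repr r = ∑ j ∈ r.support, f * S.repr (single j (r j)) := by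
    rw [← Finset.mul_sum, ← map_sum]
    rw [show (∑ x ∈ r.support, Finsupp.single x (r x)) = r from Finsupp.sum_single r]
  rw [h1, map_sum, Finsupp.finset_sum_apply]
  exact Finset.sum_congr rfl fun j hj => coeff_mul_single S _ _ _ _

end SL

open SL in
/-- For a nonzero `f` in the skew Laurent polynomial ring `K_γ[t^{±1}]`,
the degree of `f` equals the dimension of `K_γ[t^{±1}] / f·K_γ[t^{±1}]` as a right
`K`-vector space (a right `K`-module, i.e. a left `Kᵐᵒᵖ`-module, via right
multiplication by elements of `K`). -/
theorem skewLaurent_deg_eq_rank_quotient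
    (K : Type) [DivisionRing K] (γ : K ≃+* K) (R : Type) [Ring R]
    (S : SkewLaurent K γ R) (f : R) (hf : f ≠ 0) :
    letI : Module Kᵐᵒᵖ R := Module.compHom R (RingHom.op S.ι)
    ∀ p : Submodule Kᵐᵒᵖ R, (p : Set R) = Set.range (fun r : R => f * r) →
      Module.rank Kᵐᵒᵖ (R ⧸ p) = ((S.deg f).toNat : Cardinal) := by
  letI : Module Kᵐᵒᵖ R := Module.compHom R (RingHom.op S.ι)
  intro p hp
  set c := S.repr.symm f with hc_def
  have hc : c ≠ 0 := fun h => hf (by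
    have := S.repr.apply_symm_apply f
    rw [← hc_def] at this  -- f = repr c
    rw [h, map_zero] at this; exact this.symm)
  have hsupp : c.support.Nonempty := Finsupp.support_nonempty_iff.mpr hc
  set n := c.support.max' hsupp with hn_def
  set m := c.support.min' hsupp with hm_def
  have hmn : m ≤ n := Finset.min'_le _ _ (c.support.max'_mem hsupp)
  have hcn : c n ≠ 0 := Finsupp.mem_support_iff.mp (c.support.max'_mem hsupp)
  have hcm : c m ≠ 0 := Finsupp.mem_support_iff.mp (c.support.min'_mem hsupp)
  have hub : ∀ i ∈ c.support, i ≤ n := fun i hi => Finset.le_max' _ _ hi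
  have hlb : ∀ i ∈ c.support, m ≤ i := fun i hi => Finset.min'_le _ _ hi
  have hub' : ∀ k : ℤ, n < k → c k = 0 := fun k hk =>
    Finsupp.notMem_support_iff.mp (fun hh => absurd (hub _ hh) (not_le.mpr hk))
  have hlb' : ∀ k : ℤ, k < m → c k = 0 := fun k hk =>
    Finsupp.notMem_support_iff.mp (fun hh => absurd (hlb _ hh) (not_le.mpr hk))
  have hdeg : S.deg f = n - m := by rw [SkewLaurent.deg, dif_pos hsupp]
  have hmem : ∀ x : R, x ∈ p ↔ ∃ r : ℤ →₀ K, f * S.repr r = x := by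
    intro x
    constructor
    · intro hx
      have hx' : x ∈ (p : Set R) := hx
      rw [hp] at hx'
      obtain ⟨r, hr⟩ := hx'
      exact ⟨S.repr.symm r, by simpa [S.repr.apply_symm_apply] using hr⟩
    · rintro ⟨r, rfl⟩
      have : f * S.repr r ∈ (p : Set R) := by rw [hp]; exact ⟨S.repr r, rfl⟩
      exact this
  have hsmul : ∀ (a : K) (x : R), (MulOpposite.op a) • x = x * S.ι a := fun a x => rfl
  have hsmul2 : ∀ (a : Kᵐᵒᵖ) (x : R), a • x = x * S.ι a.unop := fun a x => rfl
  -- the single-step coefficient formula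
  have hone : ∀ (j : ℤ) (b : K) (k : ℤ),
      S.repr.symm (f * S.repr (single j b)) k = c (k-j) * gp γ (k-j) b :=
    fun j b k => coeff_mul_single S f j b k
  -- width lemma
  have hwidth : ∀ r : ℤ →₀ K,
      (∀ k ∈ (S.repr.symm (f * S.repr r)).support, m ≤ k ∧ k < n) → r = 0 := by
    intro r hr
    by_contra hr0
    have hrs : r.support.Nonempty := Finsupp.support_nonempty_iff.mpr hr0
    set N := r.support.max' hrs with hN_def
    set M := r.support.min' hrs with hM_def
    have hMN : M ≤ N := Finset.min'_le _ _ (r.support.max'_mem hrs)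
    have hrN : r N ≠ 0 := Finsupp.mem_support_iff.mp (r.support.max'_mem hrs)
    have hrM : r M ≠ 0 := Finsupp.mem_support_iff.mp (r.support.min'_mem hrs)
    have htop : S.repr.symm (f * S.repr r) (n + N) = c n * gp γ n (r N) := by
      rw [coeff_mul]
      rw [Finset.sum_eq_single N]
      · rw [show n + N - N = n by ring]
      · intro j hj hjN
        have hjN' : j < N := lt_of_le_of_ne (Finset.le_max' _ _ hj) hjN
        rw [hub' (n + N - j) (by omega), zero_mul]
      · intro h; exact absurd (r.support.max'_mem hrs) h
    have hbot : S.repr.symm (f * S.repr r) (m + M) = c m * gp γ m (r M) := by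
      rw [coeff_mul]
      rw [Finset.sum_eq_single M]
      · rw [show m + M - M = m by ring]
      · intro j hj hjM
        have hjM' : M < j := lt_of_le_of_ne (Finset.min'_le _ _ hj) (Ne.symm hjM)
        rw [hlb' (m + M - j) (by omega), zero_mul]
      · intro h; exact absurd (r.support.min'_mem hrs) h
    have hgn : gp γ n (r N) ≠ 0 := fun h => hrN (by
      have := (gp γ n).injective (h.trans (map_zero (gp γ n)).symm); exact this)
    have hgm : gp γ m (r M) ≠ 0 := fun h => hrM (by
      have := (gp γ m).injective (h.trans (map_zero (gp γ m)).symm); exact this)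
    have h1 : (n + N) ∈ (S.repr.symm (f * S.repr r)).support :=
      Finsupp.mem_support_iff.mpr (by rw [htop]; exact mul_ne_zero hcn hgn)
    have h2 : (m + M) ∈ (S.repr.symm (f * S.repr r)).support :=
      Finsupp.mem_support_iff.mpr (by rw [hbot]; exact mul_ne_zero hcm hgm)
    have w1 := hr _ h1
    have w2 := hr _ h2
    omega
  -- phase 1: reduce the top below n
  have phase1 : ∀ (Nb : ℕ) (v : ℤ →₀ K), (∀ k ∈ v.support, k < n + Nb) →
      ∃ r, ∀ k ∈ (v - S.repr.symm (f * S.repr r)).support, k < n := by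
    intro Nb
    induction Nb with
    | zero =>
      intro v hv
      refine ⟨0, fun k hk => ?_⟩
      have hk' : k ∈ v.support := by simpa using hk
      have := hv k hk'
      push_cast at this
      omega
    | succ Nb ih =>
      intro v hv
      by_cases htop : v (n + Nb) = 0
      · refine ih v fun k hk => ?_
        have h1 := hv k hk
        have h2 : k ≠ n + Nb := fun h => Finsupp.mem_support_iff.mp hk (h ▸ htop)
        push_cast at h1 ⊢
        omega
      · set b := (gp γ n).symm ((c n)⁻¹ * v (n + Nb)) with hb_def
        set v' := v - S.repr.symm (f * S.repr (single (Nb : ℤ) b)) with hv'_def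
        have hkill : v' (n + Nb) = 0 := by
          rw [hv'_def, Finsupp.sub_apply, hone, show n + (Nb:ℤ) - Nb = n by ring,
            hb_def, RingEquiv.apply_symm_apply, ← mul_assoc, mul_inv_cancel₀ hcn,
            one_mul, sub_self]
        have hbnd : ∀ k ∈ v'.support, k < n + Nb := by
          intro k hk
          have hk' : k ≠ n + Nb := fun h => Finsupp.mem_support_iff.mp hk (h ▸ hkill)
          rcases Finset.mem_union.mp (Finsupp.support_sub hk) with h | h
          · have := hv k h; push_cast at this; omega
          · have hcne : c (k - Nb) ≠ 0 := by
              intro h0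
              apply Finsupp.mem_support_iff.mp h
              rw [hone, h0, zero_mul]
            have := hub _ (Finsupp.mem_support_iff.mpr hcne)
            omega
        obtain ⟨r', hr'⟩ := ih v' hbnd
        refine ⟨single (Nb : ℤ) b + r', fun k hk => ?_⟩
        apply hr' k
        have heq : v - S.repr.symm (f * S.repr (single (Nb:ℤ) b + r'))
            = v' - S.repr.symm (f * S.repr r') := by
          rw [hv'_def, map_add, mul_add, map_add, sub_add_eq_sub_sub]
        rwa [heq] at hk
  -- phase 2: reduce the bottom up to m
  have phase2 : ∀ (Nb : ℕ) (v : ℤ →₀ K), (∀ k ∈ v.support, k < n ∧ m - Nb ≤ k) →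
      ∃ r, ∀ k ∈ (v - S.repr.symm (f * S.repr r)).support, m ≤ k ∧ k < n := by
    intro Nb
    induction Nb with
    | zero =>
      intro v hv
      refine ⟨0, ?_⟩
      intro k hk
      have := hv k (by simpa using hk)
      push_cast at this
      omega
    | succ Nb ih =>
      intro v hv
      by_cases hbotz : v (m - Nb - 1) = 0
      · refine ih v fun k hk => ?_
        have h1 := hv k hk
        have h2 : k ≠ m - Nb - 1 := fun h => Finsupp.mem_support_iff.mp hk (h ▸ hbotz)
        push_cast at h1 ⊢
        omega
      · set b := (gp γ m).symm ((c m)⁻¹ * v (m - Nb - 1)) with hb_def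
        set v' := v - S.repr.symm (f * S.repr (single (-(Nb : ℤ) - 1) b)) with hv'_def
        have hkill : v' (m - Nb - 1) = 0 := by
          rw [hv'_def, Finsupp.sub_apply, hone, show m - (Nb:ℤ) - 1 - (-(Nb:ℤ) - 1) = m by ring,
            hb_def, RingEquiv.apply_symm_apply, ← mul_assoc, mul_inv_cancel₀ hcm,
            one_mul, sub_self]
        have hbnd : ∀ k ∈ v'.support, k < n ∧ m - Nb ≤ k := by
          intro k hk
          have hk' : k ≠ m - Nb - 1 := fun h => Finsupp.mem_support_iff.mp hk (h ▸ hkill)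
          rcases Finset.mem_union.mp (Finsupp.support_sub hk) with h | h
          · have := hv k h; push_cast at this; omega
          · have hcne : c (k - (-(Nb:ℤ) - 1)) ≠ 0 := by
              intro h0
              apply Finsupp.mem_support_iff.mp h
              rw [hone, h0, zero_mul]
            have h1 := hub _ (Finsupp.mem_support_iff.mpr hcne)
            have h2 := hlb _ (Finsupp.mem_support_iff.mpr hcne)
            omega
        obtain ⟨r', hr'⟩ := ih v' hbnd
        refine ⟨single (-(Nb:ℤ) - 1) b + r', fun k hk => ?_⟩
        apply hr' k
        have heq : v - S.repr.symm (f * S.repr (single (-(Nb:ℤ) - 1) b + r'))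
            = v' - S.repr.symm (f * S.repr r') := by
          rw [hv'_def, map_add, mul_add, map_add, sub_add_eq_sub_sub]
        rwa [heq] at hk
  -- combined reduction
  have reduce : ∀ v : ℤ →₀ K,
      ∃ r, ∀ k ∈ (v - S.repr.symm (f * S.repr r)).support, m ≤ k ∧ k < n := by
    intro v
    obtain ⟨N1, hN1⟩ : ∃ N1 : ℕ, ∀ k ∈ v.support, k < n + N1 := by
      rcases v.support.eq_empty_or_nonempty with h | h
      · exact ⟨0, fun k hk => by rw [h] at hk; exact absurd hk (Finset.notMem_empty k)⟩
      · refine ⟨(v.support.max' h - n + 1).toNat, fun k hk => ?_⟩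
        have h1 := Finset.le_max' _ _ hk
        have h2 := Int.self_le_toNat (v.support.max' h - n + 1)
        omega
    obtain ⟨r1, hr1⟩ := phase1 N1 v hN1
    set v1 := v - S.repr.symm (f * S.repr r1) with hv1_def
    obtain ⟨N2, hN2⟩ : ∃ N2 : ℕ, ∀ k ∈ v1.support, m - N2 ≤ k := by
      rcases v1.support.eq_empty_or_nonempty with h | h
      · exact ⟨0, fun k hk => by rw [h] at hk; exact absurd hk (Finset.notMem_empty k)⟩
      · refine ⟨(m - v1.support.min' h).toNat, fun k hk => ?_⟩
        have h1 := Finset.min'_le _ _ hk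
        have h2 := Int.self_le_toNat (m - v1.support.min' h)
        omega
    obtain ⟨r2, hr2⟩ := phase2 N2 v1 (fun k hk => ⟨hr1 k hk, hN2 k hk⟩)
    refine ⟨r1 + r2, fun k hk => ?_⟩
    apply hr2 k
    have heq : v - S.repr.symm (f * S.repr (r1 + r2))
        = v1 - S.repr.symm (f * S.repr r2) := by
      rw [hv1_def, map_add, mul_add, map_add, sub_add_eq_sub_sub]
    rwa [heq] at hk
  -- dimension setup
  set d : ℕ := (n - m).toNat with hd_def
  have hd : (d : ℤ) = n - m := Int.toNat_of_nonneg (by omega)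
  have hι : ∀ a : K, S.ι a = S.repr (single 0 a) := fun a => by
    rw [S.repr_single]; simp
  set e : Fin d → R ⧸ p :=
    fun k => Submodule.Quotient.mk (S.repr (single (m + ((k : ℕ) : ℤ)) 1)) with he_def
  -- spanning
  have hspan : ∀ q : R ⧸ p, q ∈ Submodule.span Kᵐᵒᵖ (Set.range e) := by
    intro q
    obtain ⟨x, rfl⟩ := Submodule.Quotient.mk_surjective p q
    obtain ⟨r, hr⟩ := reduce (S.repr.symm x)
    set w := S.repr.symm x - S.repr.symm (f * S.repr r) with hw_def
    have hx : x = f * S.repr r + S.repr w := by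
      rw [hw_def, map_sub, S.repr.apply_symm_apply, S.repr.apply_symm_apply]; abel
    have hmk : (Submodule.Quotient.mk x : R ⧸ p) = Submodule.Quotient.mk (S.repr w) := by
      rw [hx]
      have h0 : (Submodule.Quotient.mk (f * S.repr r) : R ⧸ p) = 0 :=
        (Submodule.Quotient.mk_eq_zero p).mpr ((hmem _).mpr ⟨r, rfl⟩)
      rw [← Submodule.mkQ_apply, map_add, Submodule.mkQ_apply, Submodule.mkQ_apply, h0,
        zero_add]
    rw [hmk]
    have hrepr : S.repr w = ∑ i ∈ w.support, S.repr (single i (w i)) := by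
      rw [← map_sum, show (∑ x ∈ w.support, Finsupp.single x (w x)) = w from
        Finsupp.sum_single w]
    rw [hrepr, ← Submodule.mkQ_apply, map_sum]
    apply Submodule.sum_mem
    intro i hi
    rw [Submodule.mkQ_apply]
    have him := hr i hi
    have hidx : ((i - m).toNat) < d := by omega
    have hsingle : S.repr (single i (w i))
        = (MulOpposite.op ((gp γ i).symm (w i)))
            • S.repr (single (m + (((i - m).toNat : ℕ) : ℤ)) 1) := by
      rw [hsmul, hι, repr_single_mul]
      congr 1
      rw [add_zero, one_mul, show m + (((i - m).toNat : ℕ) : ℤ) = i by omega,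
        RingEquiv.apply_symm_apply]
    rw [hsingle, Submodule.Quotient.mk_smul]
    apply Submodule.smul_mem
    apply Submodule.subset_span
    exact ⟨⟨(i - m).toNat, hidx⟩, rfl⟩
  -- linear independence
  have hli : LinearIndependent Kᵐᵒᵖ e := by
    rw [Fintype.linearIndependent_iff]
    intro g hg i0
    set u : ℤ →₀ K :=
      ∑ k : Fin d, single (m + ((k : ℕ) : ℤ)) (gp γ (m + ((k : ℕ) : ℤ)) (g k).unop)
        with hu_def
    have hx : ∑ k : Fin d, g k • S.repr (single (m + ((k : ℕ) : ℤ)) 1) = S.repr u := by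
      rw [hu_def, map_sum]
      refine Finset.sum_congr rfl fun k _ => ?_
      rw [hsmul2, hι, repr_single_mul]
      congr 1
      rw [add_zero, one_mul]
    have hup : S.repr u ∈ p := by
      rw [← hx]
      have hmkz : (Submodule.Quotient.mk
          (∑ k : Fin d, g k • S.repr (single (m + ((k : ℕ) : ℤ)) 1)) : R ⧸ p) = 0 := by
        rw [← Submodule.mkQ_apply, map_sum]
        simp only [map_smul, Submodule.mkQ_apply]
        exact hg
      exact (Submodule.Quotient.mk_eq_zero p).mp hmkz
    obtain ⟨r, hrr⟩ := (hmem _).mp hup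
    have hu_supp : ∀ jj ∈ u.support, m ≤ jj ∧ jj < n := by
      intro jj hjj
      by_contra hcon
      apply Finsupp.mem_support_iff.mp hjj
      rw [hu_def, Finsupp.finset_sum_apply]
      apply Finset.sum_eq_zero
      intro k _
      rw [Finsupp.single_apply, if_neg]
      intro h
      have hk : (k : ℕ) < d := k.isLt
      omega
    have hr0 : r = 0 := hwidth r (by rw [hrr, S.repr.symm_apply_apply]; exact hu_supp)
    have hu0 : u = 0 := by
      apply S.repr.injective
      rw [map_zero, ← hrr, hr0, map_zero, mul_zero]
    have happ : u (m + ((i0 : ℕ) : ℤ)) = gp γ (m + ((i0 : ℕ) : ℤ)) (g i0).unop := by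
      rw [hu_def, Finsupp.finset_sum_apply]
      rw [Finset.sum_eq_single i0]
      · rw [Finsupp.single_apply, if_pos rfl]
      · intro k _ hk
        rw [Finsupp.single_apply, if_neg]
        intro h
        apply hk
        have hkk : (k : ℕ) = (i0 : ℕ) := by omega
        exact Fin.ext hkk
      · intro h; exact absurd (Finset.mem_univ i0) h
    rw [hu0] at happ
    have hunop : (g i0).unop = 0 :=
      (gp γ (m + ((i0 : ℕ) : ℤ))).injective (by rw [map_zero, ← happ]; rfl)
    calc g i0 = MulOpposite.op (g i0).unop := rfl
      _ = 0 := by rw [hunop]; rfl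
  have B : Module.Basis (Fin d) Kᵐᵒᵖ (R ⧸ p) := Module.Basis.mk hli (fun x _ => hspan x)
  rw [rank_eq_card_basis B, hdeg]
  simp [hd_def]
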